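/- Let G be a bipartite simple graph on vertex set {1,…,n} and let e_1,…,e_N be an enumeration of the edges of G. Then the sequence of edge-binomials f_{e_1},…,f_{e_N} is a d-sequence in S if and only if the corresponding sequence of parity edge-binomials g_{e_1},…,g_{e_N} is a d-sequence in S. -/

import Mathlib

open MvPolynomial

/-- The edge-binomial `f_{ij} = x_i * y_j - x_j * y_i` in
`S = k[x_1,…,x_n,y_1,…,y_n]`, realized as `MvPolynomial (Fin n ⊕ Fin n) k`
with `x_i = X (Sum.inl i)` and `y_i = X (Sum.inr i)`. -/
noncomputable def edgeBinomial (k : Type) [Field k] {n : ℕ} (i j : Fin n) :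
    MvPolynomial (Fin n ⊕ Fin n) k :=
  X (Sum.inl i) * X (Sum.inr j) - X (Sum.inl j) * X (Sum.inr i)

/-- The parity edge-binomial `g_{ij} = x_i * x_j - y_i * y_j`. -/
noncomputable def parityBinomial (k : Type) [Field k] {n : ℕ} (i j : Fin n) :
    MvPolynomial (Fin n ⊕ Fin n) k :=
  X (Sum.inl i) * X (Sum.inl j) - X (Sum.inr i) * X (Sum.inr j)

/-- `a 0, …, a (m-1)` is a d-sequence: it is a minimal system of generators of the
ideal it generates, and `((a_0,…,a_{i-1}) : a_i * a_j) = ((a_0,…,a_{i-1}) : a_j)`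
for all `i ≤ j`. -/
def IsDSequence {R : Type*} [CommRing R] {m : ℕ} (a : Fin m → R) : Prop :=
  (∀ i : Fin m, a i ∉ Ideal.span (a '' {j | j ≠ i})) ∧
  ∀ i j : Fin m, i ≤ j →
    Submodule.colon (Ideal.span (a '' {l | l < i})) (Ideal.span {a i * a j}) =
      Submodule.colon (Ideal.span (a '' {l | l < i})) (Ideal.span {a j})

section Aux
variable {R : Type*} [CommRing R]

lemma mem_map_ringEquiv (e : R ≃+* R) (I : Ideal R) (x : R) :
    e x ∈ I.map (e : R →+* R) ↔ x ∈ I := by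
  rw [Ideal.map_comap_of_equiv, Ideal.mem_comap, RingEquiv.symm_apply_apply]

lemma mem_colon_map_ringEquiv (e : R ≃+* R) (I J : Ideal R) (y : R) :
    e y ∈ Submodule.colon (I.map (e : R →+* R)) (J.map (e : R →+* R)) ↔
      y ∈ Submodule.colon I J := by
  rw [Submodule.mem_colon, Submodule.mem_colon]
  constructor
  · intro h q hq
    have := h (e q) ((mem_map_ringEquiv e J q).mpr hq)
    simpa [smul_eq_mul, ← map_mul, mem_map_ringEquiv] using this
  · intro h p hp
    obtain ⟨q, rfl⟩ := e.surjective p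
    rw [SetLike.mem_coe, mem_map_ringEquiv] at hp
    have := h q hp
    simpa [smul_eq_mul, ← map_mul, mem_map_ringEquiv] using this

lemma isDSequence_comp_ringEquiv {m : ℕ} (e : R ≃+* R) (a : Fin m → R) :
    IsDSequence (fun t => e (a t)) ↔ IsDSequence a := by
  have hspan : ∀ s : Set (Fin m),
      Ideal.span ((fun t => e (a t)) '' s) = (Ideal.span (a '' s)).map (e : R →+* R) := by
    intro s
    rw [Ideal.map_span, Set.image_image]; rfl
  unfold IsDSequence
  apply and_congr
  · apply forall_congr'; intro i
    rw [hspan, mem_map_ringEquiv]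
  · apply forall_congr'; intro i
    apply forall_congr'; intro j
    apply imp_congr Iff.rfl
    have h1 : Ideal.span ({(fun t => e (a t)) i * (fun t => e (a t)) j} : Set R) =
        (Ideal.span {a i * a j}).map (e : R →+* R) := by
      rw [Ideal.map_span]; simp [← map_mul]
    have h2 : Ideal.span ({(fun t => e (a t)) j} : Set R) =
        (Ideal.span {a j}).map (e : R →+* R) := by
      rw [Ideal.map_span]; simp
    rw [hspan, h1, h2]
    constructor
    · intro h
      ext y
      have := congrArg (fun I : Ideal R => e y ∈ I) h
      simpa [mem_colon_map_ringEquiv] using this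
    · intro h
      ext x
      obtain ⟨y, rfl⟩ := e.surjective x
      rw [mem_colon_map_ringEquiv, mem_colon_map_ringEquiv, h]

lemma isDSequence_unit_mul {m : ℕ} (c a : Fin m → R) (hc : ∀ i, IsUnit (c i)) :
    IsDSequence (fun t => c t * a t) ↔ IsDSequence a := by
  have hspan : ∀ s : Set (Fin m),
      Ideal.span ((fun t => c t * a t) '' s) = Ideal.span (a '' s) := by
    intro s
    apply le_antisymm
    · rw [Ideal.span_le]; rintro _ ⟨t, ht, rfl⟩
      exact Ideal.mul_mem_left _ _ (Ideal.subset_span ⟨t, ht, rfl⟩)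
    · rw [Ideal.span_le]; rintro _ ⟨t, ht, rfl⟩
      have hat : a t = ((hc t).unit⁻¹ : Rˣ) * (c t * a t) := by
        rw [← mul_assoc, IsUnit.val_inv_mul, one_mul]
      rw [hat]
      exact Ideal.mul_mem_left _ _ (Ideal.subset_span ⟨t, ht, rfl⟩)
  unfold IsDSequence
  apply and_congr
  · apply forall_congr'; intro i
    rw [hspan]
    simp only [not_iff_not]
    exact Ideal.unit_mul_mem_iff_mem _ (hc i)
  · apply forall_congr'; intro i
    apply forall_congr'; intro j
    apply imp_congr Iff.rfl
    have h1 : Ideal.span ({(fun t => c t * a t) i * (fun t => c t * a t) j} : Set R) =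
        Ideal.span {a i * a j} := by
      have heq : (fun t => c t * a t) i * (fun t => c t * a t) j
          = (c i * c j) * (a i * a j) := by ring
      rw [heq, Ideal.span_singleton_mul_left_unit ((hc i).mul (hc j))]
    have h2 : Ideal.span ({(fun t => c t * a t) j} : Set R) = Ideal.span {a j} :=
      Ideal.span_singleton_mul_left_unit (hc j) _
    rw [hspan, h1, h2]

end Aux

open Classical in
/-- The permutation of the variables that swaps `x_v` and `y_v` for `v ∉ A`. -/
noncomputable def swapPerm {n : ℕ} (A : Set (Fin n)) : (Fin n ⊕ Fin n) ≃ (Fin n ⊕ Fin n) :=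
  Function.Involutive.toPerm
    (fun v => match v with
      | .inl i => if i ∈ A then .inl i else .inr i
      | .inr i => if i ∈ A then .inr i else .inl i)
    (by rintro (i | i) <;> by_cases h : i ∈ A <;> simp [h])

/-- `α, β : Fin N → Fin n` is an enumeration (with a choice of orientation) of the
edges of the graph `G`. -/
def IsEdgeEnumeration {n N : ℕ} (G : SimpleGraph (Fin n)) (α β : Fin N → Fin n) : Prop :=
  (∀ t, G.Adj (α t) (β t)) ∧
  (∀ e ∈ G.edgeSet, ∃ t, e = s(α t, β t)) ∧
  Function.Injective (fun t => (s(α t, β t) : Sym2 (Fin n)))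

/-- The edge-binomials of `G` form a d-sequence (for some enumeration of the edges). -/
def EdgeBinomialsFormDSequence (k : Type) [Field k] {n : ℕ} (G : SimpleGraph (Fin n)) : Prop :=
  ∃ (N : ℕ) (α β : Fin N → Fin n), IsEdgeEnumeration G α β ∧
    IsDSequence (fun t => edgeBinomial k (α t) (β t))

/-- The parity edge-binomials of `G` form a d-sequence. -/
def ParityBinomialsFormDSequence (k : Type) [Field k] {n : ℕ} (G : SimpleGraph (Fin n)) : Prop :=
  ∃ (N : ℕ) (α β : Fin N → Fin n), IsEdgeEnumeration G α β ∧
    IsDSequence (fun t => parityBinomial k (α t) (β t))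

/-- A graph is unicyclic if it contains exactly one cycle, i.e. there is a unique
set of edges which is the edge set of some cycle. -/
def IsUnicyclic {V : Type*} (G : SimpleGraph V) : Prop :=
  ∃! s : Set (Sym2 V), ∃ (v : V) (w : G.Walk v v), w.IsCycle ∧ s = {e | e ∈ w.edges}

/-- The degree of a vertex (number of neighbours). -/
noncomputable def degr {V : Type*} (G : SimpleGraph V) (v : V) : ℕ := (G.neighborSet v).ncard

/-- `H` belongs to the class `T_m` with center `k0`: `H` is a tree, the center has
degree `m`, and every other vertex has degree at most `2`. -/
def IsTmTree {n : ℕ} (H : SimpleGraph (Fin n)) (m : ℕ) (k0 : Fin n) : Prop :=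
  H.IsTree ∧ degr H k0 = m ∧ ∀ v : Fin n, v ≠ k0 → degr H v ≤ 2

/-- The graph obtained from `G` by adding the edge `{u, v}`. -/
def addEdge {V : Type*} (G : SimpleGraph V) (u v : V) : SimpleGraph V :=
  G ⊔ SimpleGraph.fromEdgeSet {s(u, v)}

/-- A graph is bipartite: its vertex set admits a bipartition such that every edge
joins the two parts. -/
def IsBipartiteGraph {V : Type*} (G : SimpleGraph V) : Prop :=
  ∃ A : Set V, ∀ u v : V, G.Adj u v → ((u ∈ A ∧ v ∉ A) ∨ (v ∈ A ∧ u ∉ A))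

/-- Let `G` be a bipartite graph on `{1,…,n}` and let
`e_1, …, e_N` be an enumeration of the edges of `G`.  Then the sequence of
edge-binomials `f_{e_1}, …, f_{e_N}` is a d-sequence in `S` if and only if the
corresponding sequence of parity edge-binomials `g_{e_1}, …, g_{e_N}` is a
d-sequence in `S`. -/
theorem edgeBinomials_dSequence_iff_parityBinomials_of_bipartite (k : Type) [Field k]
    {n N : ℕ} (G : SimpleGraph (Fin n)) (hbip : IsBipartiteGraph G)
    (α β : Fin N → Fin n) (henum : IsEdgeEnumeration G α β) :
    IsDSequence (fun t => edgeBinomial k (α t) (β t)) ↔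
      IsDSequence (fun t => parityBinomial k (α t) (β t)) := by

  classical
  obtain ⟨A, hA⟩ := hbip
  set e : MvPolynomial (Fin n ⊕ Fin n) k ≃+* MvPolynomial (Fin n ⊕ Fin n) k :=
    (renameEquiv k (swapPerm A)).toRingEquiv with he
  have hswapl : ∀ i : Fin n, swapPerm A (Sum.inl i) = if i ∈ A then Sum.inl i else Sum.inr i := by
    intro i; rfl
  have hswapr : ∀ i : Fin n, swapPerm A (Sum.inr i) = if i ∈ A then Sum.inr i else Sum.inl i := by
    intro i; rfl
  set c : Fin N → MvPolynomial (Fin n ⊕ Fin n) k :=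
    fun t => if α t ∈ A then 1 else -1 with hcdef
  have hc : ∀ t, IsUnit (c t) := by
    intro t
    by_cases h : α t ∈ A <;> simp [hcdef, h]
  have key : (fun t => e (edgeBinomial k (α t) (β t)))
      = fun t => c t * parityBinomial k (α t) (β t) := by
    funext t
    have hadj := henum.1 t
    rcases hA _ _ hadj with ⟨ha, hb⟩ | ⟨hb, ha⟩
    · simp only [he, AlgEquiv.toRingEquiv_eq_coe, AlgEquiv.coe_ringEquiv,
        edgeBinomial, parityBinomial, map_sub, map_mul, renameEquiv_apply, rename_X,
        hswapl, hswapr, if_pos ha, if_neg hb, hcdef]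
      ring
    · simp only [he, AlgEquiv.toRingEquiv_eq_coe, AlgEquiv.coe_ringEquiv,
        edgeBinomial, parityBinomial, map_sub, map_mul, renameEquiv_apply, rename_X,
        hswapl, hswapr, if_pos hb, if_neg ha, hcdef]
      ring
  rw [← isDSequence_comp_ringEquiv e (fun t => edgeBinomial k (α t) (β t)), key,
    isDSequence_unit_mul c _ hc]
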